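/- For the function space Λ^⊥ = { g(x,y,r) = (r/π)(1 − Σ_i ω_i 1{y=i})·E_t[h|Y=k] + ((r/π)Σ_i ω_i 1{y=i} − (1−r)/(1−π))·h(x) : E_t[h] = 0 }, every element g ∈ Λ^⊥ is orthogonal (in L²) to the nuisance tangent space Λ_π = { (r/π − (1−r)/(1−π))·a : a ∈ R^{k−1} }, i.e., E[g(X,Y,R)·(R/π − (1−R)/(1−π))] = 0 componentwise. -/

import Mathlib

open MeasureTheory

/-- Every element
`g(x,y,r) = (r/π)(1 − ∑_i ω_i 1{y=i})·E_t[h|Y=k] + ((r/π)∑_i ω_i 1{y=i} − (1−r)/(1−π))·h(x)`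
of `Λ^⊥` (with `E_t[h]=0`) is L²-orthogonal to the nuisance tangent space
`Λ_π = {(r/π − (1−r)/(1−π))·a}`, i.e. `E[g(X,Y,R)·(R/π − (1−R)/(1−π))] = 0`
componentwise under the pooled distribution. -/
theorem elsa_stmt11 {k : ℕ} (hk : 0 < k) {X : Type*} [MeasurableSpace X]
    (μ : Fin k → Measure X) [∀ j, IsProbabilityMeasure (μ j)]  -- common p(x|y=j)
    (ps pt : Fin k → ℝ) (hps : ∀ j, 0 < ps j)
    (hps1 : ∑ j, ps j = 1) (hpt1 : ∑ j, pt j = 1)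
    (π : ℝ) (hπ : π ∈ Set.Ioo (0:ℝ) 1)
    (ω : Fin k → ℝ) (hω : ∀ j, ω j = pt j / ps j)
    (hωps : ∑ j, ω j * ps j = 1)
    (h : X → EuclideanSpace ℝ (Fin (k-1)))
    (hint : ∀ j, Integrable h (μ j))
    (hEt : ∑ j, pt j • (∫ x, h x ∂(μ j)) = 0)   -- E_t[h(X)] = 0
    (c : EuclideanSpace ℝ (Fin (k-1)))
    (hc : c = ∫ x, h x ∂(μ ⟨k - 1, by omega⟩)) :  -- c = E_t[h|Y=k]
    -- E[(R/π − (1−R)/(1−π)) • g(X,Y,R)] = 0 :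
    π • (∑ j, ps j • ∫ x,
          (1/π) • (((1/π) * (1 - ω j)) • c + ((1/π) * ω j - 0) • h x) ∂(μ j))
      + (1 - π) • (∑ j, pt j • ∫ x,
          (-(1/(1-π))) • (((0:ℝ)) • c + (0 - 1/(1-π)) • h x) ∂(μ j)) = 0 := by
  have hωpt : ∀ j, ω j * ps j = pt j := by
    intro j; rw [hω, div_mul_cancel₀ _ (hps j).ne']
  set I : Fin k → EuclideanSpace ℝ (Fin (k-1)) := fun j => ∫ x, h x ∂(μ j) with hI
  have key1 : ∀ j, (∫ x, (1/π) • (((1/π) * (1 - ω j)) • c + ((1/π) * ω j - 0) • h x) ∂(μ j))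
      = ((1/π) * ((1/π) * (1 - ω j))) • c + ((1/π) * ((1/π) * ω j)) • I j := by
    intro j
    have hInt2 : Integrable (fun x => ((1/π) * ω j) • h x) (μ j) := (hint j).smul ((1/π) * ω j)
    rw [sub_zero, integral_smul, integral_add (integrable_const _) hInt2,
      integral_const, integral_smul, smul_add, smul_smul, smul_smul]
    simp [measure_univ, smul_smul, hI]
  have key2 : ∀ j, (∫ x, (-(1/(1-π))) • (((0:ℝ)) • c + (0 - 1/(1-π)) • h x) ∂(μ j))
      = ((1/(1-π)) * (1/(1-π))) • I j := by
    intro j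
    simp only [zero_smul, zero_add, zero_sub, neg_smul, smul_neg, neg_neg]
    rw [integral_smul, integral_smul, smul_smul]
  simp_rw [key1, key2, smul_add, smul_smul]
  rw [Finset.sum_add_distrib]
  have e1 : ∑ j, (ps j * ((1/π) * ((1/π) * (1 - ω j)))) • c = 0 := by
    rw [← Finset.sum_smul]
    have : ∑ j, ps j * ((1/π) * ((1/π) * (1 - ω j)))
        = (1/π) * (1/π) * ∑ j, (ps j - ω j * ps j) := by
      rw [Finset.mul_sum]; exact Finset.sum_congr rfl fun j _ => by ring
    rw [this, Finset.sum_sub_distrib, hps1, hωps]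
    simp
  have e2 : ∑ j, (ps j * ((1/π) * ((1/π) * ω j))) • I j
      = ((1/π) * (1/π)) • ∑ j, pt j • I j := by
    rw [Finset.smul_sum]
    refine Finset.sum_congr rfl fun j _ => ?_
    rw [smul_smul, ← hωpt j]; ring_nf
  have e3 : ∑ j, (pt j * ((1/(1-π)) * (1/(1-π)))) • I j
      = ((1/(1-π)) * (1/(1-π))) • ∑ j, pt j • I j := by
    rw [Finset.smul_sum]
    refine Finset.sum_congr rfl fun j _ => ?_
    rw [smul_smul]; ring_nf
  rw [e1, e2, e3, hEt]
  simp
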